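/- Let X, Y ∈ Mat_n(ℂ), i ∈ ℂⁿ, and let j : ℂⁿ → ℂ[x] be a ℂ-linear map. On the module ℂ[x]ⁿ ⊕ ℂ[x]ⁿ define the ℂ-linear maps: δ(p,q) = (x·p − X·p + q, x·q − X·q); a₀(p,q) = Ĵ(q), where Ĵ : ℂ[x]ⁿ → ℂ[x] is the unique ℂ-linear map with Ĵ(x^d·e) = x^d·j(e) for all d ≥ 0 and e ∈ ℂⁿ; a₁(p,q) = E(p) + F(q), where E, F : ℂ[x]ⁿ → ℂⁿ are the unique ℂ-linear maps with E(x^d·e) = X^d·e and F(x^d·e) = X^d·Y·e; and î : ℂ[x] → ℂⁿ, î(f) = f(X)·i. Then î ∘ a₀ = a₁ ∘ δ holds (as maps ℂ[x]ⁿ ⊕ ℂ[x]ⁿ → ℂⁿ) if and only if for every v ∈ ℂⁿ one has v + X·Y·v − Y·X·v = (j(v))(X)·i. -/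
import Mathlib

open Polynomial

namespace KoszulAux

variable {n : ℕ}

/-- The map `p ↦ x·p − X·p`, componentwise. -/
noncomputable def Dmap (X : Matrix (Fin n) (Fin n) ℂ) :
    (Fin n → Polynomial ℂ) →ₗ[ℂ] (Fin n → Polynomial ℂ) where
  toFun p := fun a => Polynomial.X * p a - ∑ b, Polynomial.C (X a b) * p b
  map_add' p q := by
    funext a
    simp only [Pi.add_apply, mul_add, Finset.sum_add_distrib]
    ring
  map_smul' c p := by
    funext a
    simp only [Pi.smul_apply, smul_eq_C_mul, RingHom.id_apply, Finset.mul_sum]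
    rw [mul_sub, Finset.mul_sum]
    congr 1
    · ring
    · exact Finset.sum_congr rfl fun b _ => by ring

lemma Dmap_monomial (X : Matrix (Fin n) (Fin n) ℂ) (d : ℕ) (e : Fin n → ℂ) :
    Dmap X (fun a => Polynomial.C (e a) * Polynomial.X ^ d) =
      (fun a => Polynomial.C (e a) * Polynomial.X ^ (d + 1))
        - (fun a => Polynomial.C ((X.mulVec e) a) * Polynomial.X ^ d) := by
  funext a
  simp only [Dmap, LinearMap.coe_mk, AddHom.coe_mk, Pi.sub_apply]
  rw [Matrix.mulVec, dotProduct, map_sum, Finset.sum_mul]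
  congr 1
  · ring
  · exact Finset.sum_congr rfl fun b _ => by rw [map_mul]; ring

lemma single_eq (b : Fin n) (d : ℕ) :
    (Pi.single b (Polynomial.X ^ d) : Fin n → Polynomial ℂ)
      = fun a => Polynomial.C ((Pi.single b 1 : Fin n → ℂ) a) * Polynomial.X ^ d := by
  funext a
  by_cases hab : a = b
  · subst hab; simp
  · simp [Pi.single_apply, hab]

/-- `M ↦ M.mulVec i` as a linear map. -/
noncomputable def Mi (i : Fin n → ℂ) : Matrix (Fin n) (Fin n) ℂ →ₗ[ℂ] (Fin n → ℂ) where
  toFun M := M.mulVec i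
  map_add' A B := Matrix.add_mulVec A B i
  map_smul' c A := Matrix.smul_mulVec c A i

end KoszulAux

open KoszulAux

theorem koszul_diagram_commutes_iff_CM_relation (n : ℕ)
    (X Y : Matrix (Fin n) (Fin n) ℂ) (i : Fin n → ℂ)
    (j : (Fin n → ℂ) →ₗ[ℂ] Polynomial ℂ)
    (Jhat : (Fin n → Polynomial ℂ) →ₗ[ℂ] Polynomial ℂ)
    (hJ : ∀ (d : ℕ) (e : Fin n → ℂ),
      Jhat (fun a => Polynomial.C (e a) * Polynomial.X ^ d) = Polynomial.X ^ d * j e)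
    (E : (Fin n → Polynomial ℂ) →ₗ[ℂ] (Fin n → ℂ))
    (hE : ∀ (d : ℕ) (e : Fin n → ℂ),
      E (fun a => Polynomial.C (e a) * Polynomial.X ^ d) = (X ^ d).mulVec e)
    (F : (Fin n → Polynomial ℂ) →ₗ[ℂ] (Fin n → ℂ))
    (hF : ∀ (d : ℕ) (e : Fin n → ℂ),
      F (fun a => Polynomial.C (e a) * Polynomial.X ^ d) = (X ^ d * Y).mulVec e) :
    (∀ p q : Fin n → Polynomial ℂ,
        (Polynomial.aeval X (Jhat q)).mulVec i =
          E (fun a => Polynomial.X * p a - ∑ b, Polynomial.C (X a b) * p b + q a)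
            + F (fun a => Polynomial.X * q a - ∑ b, Polynomial.C (X a b) * q b))
    ↔ (∀ v : Fin n → ℂ,
        v + (X * Y).mulVec v - (Y * X).mulVec v = (Polynomial.aeval X (j v)).mulVec i) := by
  constructor
  · intro H v
    have H0 := H 0 (fun a => Polynomial.C (v a) * Polynomial.X ^ 0)
    have harg1 : (fun a => Polynomial.X * (0 : Fin n → Polynomial ℂ) a
        - ∑ b, Polynomial.C (X a b) * (0 : Fin n → Polynomial ℂ) b
        + Polynomial.C (v a) * Polynomial.X ^ 0)
        = fun a => Polynomial.C (v a) * Polynomial.X ^ 0 := by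
      funext a; simp
    have harg2 : (fun a => Polynomial.X * (Polynomial.C (v a) * Polynomial.X ^ 0)
        - ∑ b, Polynomial.C (X a b) * (Polynomial.C (v b) * Polynomial.X ^ 0))
        = Dmap X (fun a => Polynomial.C (v a) * Polynomial.X ^ 0) := rfl
    rw [harg1, harg2, Dmap_monomial, map_sub, hJ, hE, hF, hF] at H0
    simp only [pow_zero, pow_one, one_mul, zero_add, Matrix.one_mulVec,
      Matrix.mulVec_mulVec] at H0
    rw [add_sub_assoc]
    exact H0.symm
  · intro h p q
    have key1 : ∀ (b : Fin n) (d : ℕ),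
        E (Dmap X (Pi.single b (Polynomial.X ^ d))) = 0 := by
      intro b d
      rw [single_eq b d, Dmap_monomial, map_sub, hE, hE, Matrix.mulVec_mulVec, ← pow_succ]
      simp
    have hED : E ∘ₗ Dmap X = 0 := by
      ext b d
      simpa [Polynomial.X_pow_eq_monomial] using congrFun (key1 b d) _
    have key2 : ∀ (b : Fin n) (d : ℕ),
        Mi i (Polynomial.aeval X (Jhat (Pi.single b (Polynomial.X ^ d))))
          = E (Pi.single b (Polynomial.X ^ d))
            + F (Dmap X (Pi.single b (Polynomial.X ^ d))) := by
      intro b d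
      rw [single_eq b d, Dmap_monomial, map_sub, hJ, hE, hF, hF]
      show ((Polynomial.aeval X) (Polynomial.X ^ d * j (Pi.single b 1))).mulVec i = _
      rw [map_mul, Polynomial.aeval_X_pow, ← Matrix.mulVec_mulVec, ← h (Pi.single b 1),
        Matrix.mulVec_sub, Matrix.mulVec_add, Matrix.mulVec_mulVec, Matrix.mulVec_mulVec,
        Matrix.mulVec_mulVec, add_sub_assoc, pow_succ, mul_assoc]
      simp [mul_assoc]
    have hmain : Mi i ∘ₗ (Polynomial.aeval X).toLinearMap ∘ₗ Jhat
        = E + F ∘ₗ Dmap X := by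
      ext b d
      simpa [Polynomial.X_pow_eq_monomial] using congrFun (key2 b d) _
    have hz : E (Dmap X p) = 0 := by
      simpa using DFunLike.congr_fun hED p
    have hq := DFunLike.congr_fun hmain q
    simp only [LinearMap.comp_apply, LinearMap.add_apply,
      AlgHom.toLinearMap_apply] at hq
    have harg1 : (fun a => Polynomial.X * p a - ∑ b, Polynomial.C (X a b) * p b + q a)
        = Dmap X p + q := rfl
    have harg2 : (fun a => Polynomial.X * q a - ∑ b, Polynomial.C (X a b) * q b)
        = Dmap X q := rfl
    rw [harg1, harg2, map_add, hz, zero_add]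
    exact hq
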